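/- Let L be a complete modular lattice and 𝔪 a submonoid with zero of End_lin(L) that is closed under complements. The following are equivalent: (a) L is 𝔪-abelian-endoregular; (b) L is 𝔪-endoregular and φ(a) ≤ a for every 𝔪-L-generated element a ∈ L and every φ ∈ 𝔪. -/

import Mathlib

section Preamble

variable {α β : Type*}

/-- A linear morphism between complete lattices: there is a kernel element `k` such that
`φ x = φ (x ⊔ k)` for all `x`, and `φ` restricts to an isomorphism of (complete) lattices
from the interval `[k, ⊤]` onto `[⊥, φ ⊤]`. -/
def IsLinMor [CompleteLattice α] [CompleteLattice β] (φ : α → β) : Prop :=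
  ∃ k : α, (∀ x, φ x = φ (x ⊔ k)) ∧
    ∃ e : Set.Icc k (⊤ : α) ≃o Set.Icc (⊥ : β) (φ ⊤),
      ∀ x : Set.Icc k (⊤ : α), (e x : β) = φ (x : α)

/-- The kernel of a linear morphism: the largest element sent to `⊥`. -/
noncomputable def linKer [CompleteLattice α] [CompleteLattice β] (φ : α → β) : α :=
  sSup {a | φ a = ⊥}

/-- A submonoid with zero of the monoid of linear endomorphisms of `α`. -/
structure IsLinSubmonoid [CompleteLattice α] (M : Set (α → α)) : Prop where
  lin_mem : ∀ φ ∈ M, IsLinMor φ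
  id_mem : (id : α → α) ∈ M
  zero_mem : (fun _ : α => (⊥ : α)) ∈ M
  comp_mem : ∀ φ ∈ M, ∀ ψ ∈ M, φ ∘ ψ ∈ M

/-- The projection onto `x` along a complement `x'`. -/
def proj [CompleteLattice α] (x x' : α) : α → α := fun a => (a ⊔ x') ⊓ x

/-- `M` is closed under complements: whenever `φ ∈ M` restricts to a linear isomorphism
`[⊥, x] → [⊥, y]` with `x, y` complemented, the composite `ι_x ∘ (φ|_x)⁻¹ ∘ π_y` is in `M`. -/
def ClosedUnderComplements [CompleteLattice α] (M : Set (α → α)) : Prop :=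
  ∀ φ ∈ M, ∀ x x' y y' : α, IsCompl x x' → IsCompl y y' →
    ∀ e : Set.Icc (⊥ : α) x ≃o Set.Icc (⊥ : α) y,
      (∀ a : Set.Icc (⊥ : α) x, ((e a : Set.Icc (⊥ : α) y) : α) = φ (a : α)) →
      (fun a : α =>
        ((e.symm ⟨(a ⊔ y') ⊓ y, bot_le, inf_le_right⟩ : Set.Icc (⊥ : α) x) : α)) ∈ M

/-- `L` is `M`-endoregular: `M` is a regular monoid. -/
def MEndoregular [CompleteLattice α] (M : Set (α → α)) : Prop :=
  ∀ φ ∈ M, ∃ ψ ∈ M, φ ∘ ψ ∘ φ = φ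

/-- `L` is `M`-Rickart: kernels of members of `M` have complements. -/
def MRickart [CompleteLattice α] (M : Set (α → α)) : Prop :=
  ∀ φ ∈ M, ∃ y, IsCompl (linKer φ) y

/-- `L` is dual-`M`-Rickart: images of members of `M` have complements. -/
def MDualRickart [CompleteLattice α] (M : Set (α → α)) : Prop :=
  ∀ φ ∈ M, ∃ y, IsCompl (φ ⊤) y

/-- The `M`-C2 condition. -/
def MC2 [CompleteLattice α] (M : Set (α → α)) : Prop :=
  ∀ a x x' : α, IsCompl x x' →
    ∀ e : Set.Icc (⊥ : α) x ≃o Set.Icc (⊥ : α) a,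
      ((fun b : α =>
          ((e ⟨(b ⊔ x') ⊓ x, bot_le, inf_le_right⟩ : Set.Icc (⊥ : α) a) : α)) ∈ M) →
      ∃ a', IsCompl a a'

/-- The `M`-D2 condition. -/
def MD2 [CompleteLattice α] (M : Set (α → α)) : Prop :=
  ∀ a x : α, (∃ x', IsCompl x x') →
    ∀ e : Set.Icc a (⊤ : α) ≃o Set.Icc (⊥ : α) x,
      ((fun b : α => ((e ⟨a ⊔ b, le_sup_left, le_top⟩ : Set.Icc (⊥ : α) x) : α)) ∈ M) →
      ∃ a', IsCompl a a'

/-- `L` is `M`-abelian: every idempotent of `M` is central in `M`. -/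
def MAbelian [CompleteLattice α] (M : Set (α → α)) : Prop :=
  ∀ ε ∈ M, ε ∘ ε = ε → ∀ φ ∈ M, ε ∘ φ = φ ∘ ε

/-- `a` is `M`-`L`-generated: it is a join of images of linear morphisms `L → [⊥, a]`
whose composites with the inclusion `ι_a` lie in `M`. -/
def MGenerated [CompleteLattice α] (M : Set (α → α)) (a : α) : Prop :=
  ∃ S : Set (α → α), S ⊆ M ∧ (∀ f ∈ S, ∀ x, f x ≤ a) ∧ (⨆ f ∈ S, f ⊤) = a

/-- A complete lattice is compact if every join representation of `⊤` has a finite subjoin. -/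
def CompactLat (α : Type*) [CompleteLattice α] : Prop :=
  ∀ s : Set α, sSup s = ⊤ → ∃ t : Finset α, ↑t ⊆ s ∧ sSup (↑t : Set α) = ⊤

/-- An element `c` is compact if the interval `[⊥, c]` is a compact lattice. -/
def CompactElt [CompleteLattice α] (c : α) : Prop :=
  ∀ s : Set α, (∀ a ∈ s, a ≤ c) → sSup s = c →
    ∃ t : Finset α, ↑t ⊆ s ∧ sSup (↑t : Set α) = c

/-- `x` is essential in `L`. -/
def Essential [CompleteLattice α] (x : α) : Prop := ∀ y, x ⊓ y = ⊥ → y = ⊥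

/-- `x` is essential in the interval `[⊥, c]`. -/
def EssentialIn [CompleteLattice α] (x c : α) : Prop :=
  x ≤ c ∧ ∀ y ≤ c, x ⊓ y = ⊥ → y = ⊥

/-- `x` is superfluous in `L`. -/
def Superfluous [CompleteLattice α] (x : α) : Prop := ∀ y, x ⊔ y = ⊤ → y = ⊤

/-- `x` is superfluous in the interval `[⊥, c]`. -/
def SuperfluousIn [CompleteLattice α] (x c : α) : Prop :=
  x ≤ c ∧ ∀ y ≤ c, x ⊔ y = c → y = c

/-- `M` contains all the projections. -/
def ContainsProjections [CompleteLattice α] (M : Set (α → α)) : Prop :=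
  ∀ x x' : α, IsCompl x x' → proj x x' ∈ M

/-- `L` is `M`-K-extending. -/
def MKExtending [CompleteLattice α] (M : Set (α → α)) : Prop :=
  ∀ φ ∈ M, ∃ c : α, (∃ c', IsCompl c c') ∧ EssentialIn (linKer φ) c

/-- `L` is `M`-K-nonsingular. -/
def MKNonsingular [CompleteLattice α] (M : Set (α → α)) : Prop :=
  ∀ φ ∈ M, Essential (linKer φ) → φ = fun _ => (⊥ : α)

/-- `L` is `M`-T-lifting. -/
def MTLifting [CompleteLattice α] (M : Set (α → α)) : Prop :=
  ∀ φ ∈ M, ∃ c c' : α, IsCompl c c' ∧ c ≤ φ ⊤ ∧ SuperfluousIn (φ ⊤ ⊓ c') c'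

end Preamble

section Aux

variable {α β : Type*} [CompleteLattice α] [CompleteLattice β]

lemma IsLinMor.mono {φ : α → β} (h : IsLinMor φ) : Monotone φ := by
  obtain ⟨k, hk, e, he⟩ := h
  intro u v huv
  rw [hk u, hk v, ← he ⟨u ⊔ k, le_sup_right, le_top⟩, ← he ⟨v ⊔ k, le_sup_right, le_top⟩]
  exact Subtype.coe_le_coe.mpr (e.monotone (Subtype.mk_le_mk.mpr (sup_le_sup_right huv k)))

lemma IsLinMor.sSup_le' {φ : α → β} (h : IsLinMor φ) (s : Set α) :
    φ (sSup s) ≤ sSup (φ '' s) := by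
  have hmono := h.mono
  obtain ⟨k, hk, e, he⟩ := h
  set t : β := sSup (φ '' s) with ht
  have htle : t ≤ φ ⊤ := sSup_le (by rintro _ ⟨x, _, rfl⟩; exact hmono le_top)
  set w : Set.Icc k (⊤ : α) := e.symm ⟨t, bot_le, htle⟩ with hw
  have hle : ∀ x ∈ s, x ≤ (w : α) := by
    intro x hx
    have h1 : φ x ≤ t := le_sSup ⟨x, hx, rfl⟩
    have h2 : e ⟨x ⊔ k, le_sup_right, le_top⟩ ≤ ⟨t, bot_le, htle⟩ := by
      apply Subtype.coe_le_coe.mp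
      rw [he ⟨x ⊔ k, le_sup_right, le_top⟩, ← hk x]
      exact h1
    have h3 : (⟨x ⊔ k, le_sup_right, le_top⟩ : Set.Icc k (⊤ : α)) ≤ w := by
      rw [hw, ← e.symm_apply_apply ⟨x ⊔ k, le_sup_right, le_top⟩]
      exact e.symm.monotone h2
    exact le_trans le_sup_left (Subtype.coe_le_coe.mpr h3)
  have h4 : sSup s ⊔ k ≤ (w : α) := sup_le (sSup_le hle) w.2.1
  calc φ (sSup s) = φ (sSup s ⊔ k) := hk _
    _ = (e ⟨sSup s ⊔ k, le_sup_right, le_top⟩ : β) := (he ⟨sSup s ⊔ k, le_sup_right, le_top⟩).symm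
    _ ≤ (e w : β) := Subtype.coe_le_coe.mpr (e.monotone (Subtype.mk_le_mk.mpr h4))
    _ = t := by rw [hw]; simp

lemma IsLinMor.map_bot {φ : α → β} (h : IsLinMor φ) : φ ⊥ = ⊥ := by
  have := h.sSup_le' ∅
  simpa using this

lemma IsLinMor.map_sup {φ : α → β} (h : IsLinMor φ) (u v : α) :
    φ (u ⊔ v) = φ u ⊔ φ v := by
  refine le_antisymm ?_ (sup_le (h.mono le_sup_left) (h.mono le_sup_right))
  have := h.sSup_le' {u, v}
  simpa [sSup_pair, Set.image_pair] using this

lemma idem_proj {α : Type*} [CompleteLattice α] [IsModularLattice α] {ε : α → α}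
    (h : IsLinMor ε) (hi : ε ∘ ε = ε) :
    ∃ k, IsCompl (ε ⊤) k ∧ ∀ a, ε a = (a ⊔ k) ⊓ ε ⊤ := by
  have hmono := h.mono
  have hi' : ∀ a, ε (ε a) = ε a := fun a => congrFun hi a
  obtain ⟨k, hk, e, he⟩ := h
  have hεk : ε k = ⊥ := by
    have h1 : (⟨k, le_rfl, le_top⟩ : Set.Icc k (⊤ : α)) ≤ e.symm ⟨⊥, le_rfl, bot_le⟩ :=
      Subtype.mk_le_mk.mpr (e.symm ⟨⊥, le_rfl, bot_le⟩).2.1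
    have h2 : e ⟨k, le_rfl, le_top⟩ ≤ ⟨⊥, le_rfl, bot_le⟩ := by
      rw [← e.apply_symm_apply ⟨⊥, le_rfl, bot_le⟩]
      exact e.monotone h1
    have h3 : (e ⟨k, le_rfl, le_top⟩ : α) ≤ ⊥ := Subtype.coe_le_coe.mpr h2
    rw [he] at h3
    exact le_bot_iff.mp h3
  have key2 : ∀ b, k ≤ b → ε b ⊔ k = b := by
    intro b hb
    have h1 : ε (ε b) = (e ⟨ε b ⊔ k, le_sup_right, le_top⟩ : α) :=
      (hk (ε b)).trans (he ⟨ε b ⊔ k, le_sup_right, le_top⟩).symm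
    have h2 : ε b = (e ⟨b, hb, le_top⟩ : α) := (he ⟨b, hb, le_top⟩).symm
    have h3 : (e ⟨ε b ⊔ k, le_sup_right, le_top⟩ : α) = (e ⟨b, hb, le_top⟩ : α) := by
      rw [← h1, ← h2, hi']
    have h4 := e.injective (Subtype.coe_injective h3)
    exact congrArg Subtype.val h4
  have himg : ∀ b, ε b ≤ ε ⊤ := fun b => hmono le_top
  have id_on : ∀ a, a ≤ ε ⊤ → ε a = a := by
    intro a ha
    have h1 : (e (e.symm ⟨a, bot_le, ha⟩) : α) = ε ((e.symm ⟨a, bot_le, ha⟩ : Set.Icc k (⊤:α)) : α) :=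
      he _
    rw [e.apply_symm_apply] at h1
    have h2 : ε ((e.symm ⟨a, bot_le, ha⟩ : Set.Icc k (⊤:α)) : α) = a := h1.symm
    rw [← h2, hi', h2]
  have hkx : k ⊓ ε ⊤ = ⊥ := by
    have h1 : ε (k ⊓ ε ⊤) = k ⊓ ε ⊤ := id_on _ inf_le_right
    have h2 : ε (k ⊓ ε ⊤) ≤ ε k := hmono inf_le_left
    rw [hεk, h1] at h2
    exact le_bot_iff.mp h2
  have hcompl : IsCompl (ε ⊤) k := by
    constructor
    · rw [disjoint_iff, inf_comm]; exact hkx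
    · rw [codisjoint_iff]; exact key2 ⊤ le_top
  refine ⟨k, hcompl, fun a => ?_⟩
  have h1 : ε (a ⊔ k) ⊔ k = a ⊔ k := key2 _ le_sup_right
  have h2 : (ε (a ⊔ k) ⊔ k) ⊓ ε ⊤ = ε (a ⊔ k) ⊔ k ⊓ ε ⊤ :=
    sup_inf_assoc_of_le k (himg _)
  rw [hk a]
  conv_rhs => rw [← h1]
  rw [h2, hkx, sup_bot_eq]

lemma proj_mem {α : Type*} [CompleteLattice α] (M : Set (α → α)) (hM : IsLinSubmonoid M)
    (hcc : ClosedUnderComplements M) {x x' : α} (h : IsCompl x x') : proj x x' ∈ M := by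
  have key := hcc id hM.id_mem x x' x x' h h (OrderIso.refl _) (fun a => rfl)
  have : (fun a : α =>
      (((OrderIso.refl (Set.Icc (⊥:α) x)).symm ⟨(a ⊔ x') ⊓ x, bot_le, inf_le_right⟩ :
        Set.Icc (⊥:α) x) : α)) = proj x x' := by
    funext a; rfl
  rwa [this] at key

end Aux

/-- `L` is `M`-abelian-endoregular iff `L` is `M`-endoregular and every
`M`-`L`-generated element is invariant under every member of `M`. -/
theorem stmt_10 {α : Type*} [CompleteLattice α] [IsModularLattice α]
    (M : Set (α → α)) (hM : IsLinSubmonoid M) (hcc : ClosedUnderComplements M) :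
    (MAbelian M ∧ MEndoregular M) ↔
      (MEndoregular M ∧ ∀ a : α, MGenerated M a → ∀ φ ∈ M, φ a ≤ a) := by
  constructor
  · rintro ⟨hAb, hEnd⟩
    refine ⟨hEnd, ?_⟩
    rintro a ⟨S, hSM, hSb, hSsup⟩ φ hφ
    have key : ∀ f ∈ S, φ (f ⊤) ≤ a := by
      intro f hf
      obtain ⟨ψ, hψ, hreg⟩ := hEnd f (hSM hf)
      have hεM : f ∘ ψ ∈ M := hM.comp_mem f (hSM hf) ψ hψ
      have hidem : (f ∘ ψ) ∘ (f ∘ ψ) = f ∘ ψ := by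
        calc (f ∘ ψ) ∘ (f ∘ ψ) = (f ∘ ψ ∘ f) ∘ ψ := rfl
          _ = f ∘ ψ := by rw [hreg]
      have hcomm := hAb (f ∘ ψ) hεM hidem φ hφ
      have h1 : φ (f ⊤) = ((f ∘ ψ) ∘ φ) (f ⊤) := by
        conv_lhs => rw [← hreg]
        calc φ ((f ∘ ψ ∘ f) ⊤) = (φ ∘ (f ∘ ψ)) (f ⊤) := rfl
          _ = ((f ∘ ψ) ∘ φ) (f ⊤) := by rw [hcomm]
      rw [h1]
      exact hSb f hf _
    have h2 : φ a ≤ sSup (φ '' ((fun f => f ⊤) '' S)) := by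
      have h3 : sSup ((fun f : α → α => f ⊤) '' S) = a := by rw [sSup_image]; exact hSsup
      rw [← h3]
      exact (hM.lin_mem φ hφ).sSup_le' _
    refine h2.trans (sSup_le ?_)
    rintro _ ⟨_, ⟨f, hf, rfl⟩, rfl⟩
    exact key f hf
  · rintro ⟨hEnd, hInv⟩
    refine ⟨?_, hEnd⟩
    intro ε hε hidem φ hφ
    obtain ⟨k, hcompl, hform⟩ := idem_proj (hM.lin_mem ε hε) hidem
    set x := ε ⊤ with hx'
    have hgenx : MGenerated M x := by
      refine ⟨{ε}, Set.singleton_subset_iff.mpr hε, ?_, by simp [hx']⟩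
      intro f hf y
      rw [Set.mem_singleton_iff] at hf
      subst hf
      rw [hform]
      exact inf_le_right
    have hπ : proj k x ∈ M := proj_mem M hM hcc hcompl.symm
    have hgenk : MGenerated M k := by
      refine ⟨{proj k x}, Set.singleton_subset_iff.mpr hπ, ?_, ?_⟩
      · intro f hf y
        rw [Set.mem_singleton_iff] at hf
        subst hf
        exact inf_le_right
      · simp [proj]
    have hxI : φ x ≤ x := hInv x hgenx φ hφ
    have hkI : φ k ≤ k := hInv k hgenk φ hφ
    have hφlin := hM.lin_mem φ hφ
    funext a
    simp only [Function.comp_apply, hform]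
    -- goal : (φ a ⊔ k) ⊓ x = φ ((a ⊔ k) ⊓ x)
    set b := a ⊔ k with hb'
    have hb : b = b ⊓ x ⊔ k := by
      rw [inf_sup_assoc_of_le x le_sup_right, hcompl.sup_eq_top, inf_top_eq]
    have h1 : φ a ⊔ k = φ (b ⊓ x) ⊔ k := by
      calc φ a ⊔ k = φ a ⊔ (φ k ⊔ k) := by rw [sup_eq_right.mpr hkI]
        _ = φ b ⊔ k := by rw [← sup_assoc, ← hφlin.map_sup]
        _ = (φ (b ⊓ x) ⊔ φ k) ⊔ k := by conv_lhs => rw [hb, hφlin.map_sup]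
        _ = φ (b ⊓ x) ⊔ k := by rw [sup_assoc, sup_eq_right.mpr hkI]
    have h2 : φ (b ⊓ x) ≤ x := (hφlin.mono inf_le_right).trans hxI
    rw [h1, sup_inf_assoc_of_le k h2, hcompl.symm.inf_eq_bot, sup_bot_eq]
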